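/- There exist two dense subspaces A and B of the product space 2^𝔠 (where 𝔠 = 2^ℵ₀) such that both A and B are left-separated but the subspace A ∪ B is not left-separated. -/

import Mathlib

universe u

open Cardinal Ordinal

/-- `o` is the order type of some left-separating well-ordering of `X`:
a well-ordering all of whose initial segments are closed. -/
def IsLeftSepType (X : Type u) [TopologicalSpace X] (o : Ordinal.{u}) : Prop :=
  ∃ (r : X → X → Prop) (hwo : IsWellOrder X r),
    (∀ x : X, IsClosed {y | r y x}) ∧ o = @Ordinal.type X r hwo

/-- A space is left-separated if it admits a left-separating well-ordering. -/
def IsLeftSeparated (X : Type u) [TopologicalSpace X] : Prop :=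
  ∃ o, IsLeftSepType X o

/-- The Cantor cube `2^𝔠` where `𝔠 = 2^ℵ₀`, realized as all functions from
`{ν | ν < 𝔠}` to `Bool`, with the product topology (where `Bool` is discrete). -/
abbrev CantorCubeContinuum : Type 1 :=
  ↥(Set.Iio ((2 ^ Cardinal.aleph0 : Cardinal.{0}).ord)) → Bool

open Set TopologicalSpace

/-- Any countable T1 space is left-separated. -/
lemma isLeftSeparated_of_countable {X : Type u} [TopologicalSpace X] [T1Space X]
    (h : Countable X) : IsLeftSeparated X := by
  obtain ⟨f, hf⟩ := exists_injective_nat X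
  set r : X → X → Prop := fun x y => f x < f y with hr
  have htri : IsTrichotomous X r := trichotomous_def.2 fun a b hab hba => (show r a b ∨ a = b ∨ r b a by
    rcases Nat.lt_trichotomy (f a) (f b) with h | h | h
    · exact Or.inl h
    · exact Or.inr (Or.inl (hf h))
    · exact Or.inr (Or.inr h)).elim (absurd · hab) (·.elim id (absurd · hba))
  have htrans : IsTrans X r := ⟨fun a b c => Nat.lt_trans⟩
  have hwf : IsWellFounded X r := ⟨InvImage.wf f (Nat.lt_wfRel.wf)⟩
  have hwo : IsWellOrder X r := ⟨⟩
  refine ⟨@Ordinal.type X r hwo, r, hwo, fun x => ?_, rfl⟩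
  have : {y | r y x} = f ⁻¹' (Set.Iio (f x)) := rfl
  rw [this]
  exact ((Set.finite_Iio (f x)).preimage hf.injOn).isClosed


/-- In a Baire space, if an open nonempty set is covered by countably many closed
sets, one of them contains a nonempty open set inside `U`. -/
lemma baire_cover {X : Type*} [TopologicalSpace X] [BaireSpace X]
    (U : Set X) (hU : IsOpen U) (hUne : U.Nonempty)
    (F : ℕ → Set X) (hF : ∀ n, IsClosed (F n)) (hcov : U ⊆ ⋃ n, F n) :
    ∃ n V, IsOpen V ∧ V.Nonempty ∧ V ⊆ U ∩ F n := by
  by_contra hcon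
  push_neg at hcon
  set E : ℕ → Set X := fun n => (F n)ᶜ ∪ (closure U)ᶜ with hE
  have hEo : ∀ n, IsOpen (E n) := fun n =>
    ((hF n).isOpen_compl).union (isClosed_closure.isOpen_compl)
  have hEd : ∀ n, Dense (E n) := by
    intro n
    rw [dense_iff_inter_open]
    intro W hW hWne
    by_cases hsub : W ⊆ closure U
    · have hWU : (W ∩ U).Nonempty := by
        obtain ⟨w, hw⟩ := hWne
        have : w ∈ closure U := hsub hw
        exact (mem_closure_iff.1 this) W hW hw
      have hVW : IsOpen (W ∩ U) := hW.inter hU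
      have := hcon n (W ∩ U) hVW hWU
      rw [Set.not_subset] at this
      obtain ⟨v, hv, hv2⟩ := this
      refine ⟨v, hv.1, ?_⟩
      have : v ∉ F n := fun hvF => hv2 ⟨hv.2, hvF⟩
      exact Or.inl this
    · rw [Set.not_subset] at hsub
      obtain ⟨w, hw, hw2⟩ := hsub
      exact ⟨w, hw, Or.inr hw2⟩
  have hdense : Dense (⋂ n, E n) := dense_iInter_of_isOpen_nat hEo hEd
  obtain ⟨u, hu⟩ := hdense.inter_open_nonempty U hU hUne
  obtain ⟨n, hn⟩ := Set.mem_iUnion.1 (hcov hu.1)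
  have := hu.2
  have hEn : u ∈ E n := Set.mem_iInter.1 this n
  rcases hEn with h | h
  · exact h hn
  · exact h (subset_closure hu.1)


lemma not_isLeftSeparated {X : Type u} [TopologicalSpace X] [T1Space X] [Nonempty X]
    (D : Set X) (hDc : D.Countable) (hDd : Dense D)
    (two : ∀ V : Set X, IsOpen V → V.Nonempty → ∃ x ∈ V, ∃ y ∈ V, x ≠ y)
    (baire : ∀ U : Set X, IsOpen U → U.Nonempty →
      ∀ F : ℕ → Set X, (∀ n, IsClosed (F n)) → U ⊆ ⋃ n, F n →
      ∃ n V, IsOpen V ∧ V.Nonempty ∧ V ⊆ U ∩ F n) :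
    ¬ IsLeftSeparated X := by
  rintro ⟨o, r, hwo, hcl, -⟩
  have hirr : ∀ x : X, ¬ r x x := by
    intro x hx
    obtain ⟨a, ha, hmin⟩ := hwo.wf.has_min {x} ⟨x, rfl⟩
    rcases ha with rfl
    exact hmin a rfl hx
  have loc : ∀ U : Set X, IsOpen U → U.Nonempty →
      ∃ d ∈ D ∩ U, ∃ V, IsOpen V ∧ V.Nonempty ∧ V ⊆ {y | r y d} ∪ {d} := by
    intro U hU hUne
    have cof : ∀ x ∈ U, ∃ d ∈ D ∩ U, r x d ∨ x = d := by
      intro x hx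
      by_contra hcon
      push_neg at hcon
      have hDIx : D ∩ U ⊆ {y | r y x} := by
        intro d hd
        rcases trichotomous_of r x d with h | h | h
        · exact absurd h (hcon d hd).1
        · exact absurd h (hcon d hd).2
        · exact h
      have hxcl : x ∈ closure (D ∩ U) := by
        rw [mem_closure_iff]
        intro W hW hxW
        obtain ⟨z, hz⟩ := hDd.inter_open_nonempty (W ∩ U) (hW.inter hU) ⟨x, hxW, hx⟩
        exact ⟨z, hz.1.1, hz.2, hz.1.2⟩
      have : x ∈ {y | r y x} := (hcl x).closure_subset_iff.2 hDIx hxcl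
      exact hirr x this
    obtain ⟨x0, hx0⟩ := hUne
    obtain ⟨d0, hd0, -⟩ := cof x0 hx0
    have hDUc : (D ∩ U).Countable := hDc.mono inter_subset_left
    obtain ⟨f, hf⟩ := hDUc.exists_eq_range ⟨d0, hd0⟩
    have hFc : ∀ n : ℕ, IsClosed ({y | r y (f n)} ∪ {f n}) :=
      fun n => (hcl (f n)).union isClosed_singleton
    have hcov : U ⊆ ⋃ n, ({y | r y (f n)} ∪ {f n}) := by
      intro x hx
      obtain ⟨d, hd, hrd⟩ := cof x hx
      rw [hf] at hd
      obtain ⟨n, rfl⟩ := hd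
      refine Set.mem_iUnion.2 ⟨n, ?_⟩
      rcases hrd with h | h
      · exact Set.mem_union_left _ h
      · exact Set.mem_union_right _ (by simp [h])
    obtain ⟨n, V, hVo, hVne, hVsub⟩ := baire U hU ⟨x0, hx0⟩ _ hFc hcov
    have hfn : f n ∈ D ∩ U := by rw [hf]; exact ⟨n, rfl⟩
    exact ⟨f n, hfn, V, hVo, hVne, fun z hz => (hVsub hz).2⟩
  have step : ∀ (d : X) (V : Set X), IsOpen V → V.Nonempty → V ⊆ {y | r y d} ∪ {d} →
      ∃ d' V', r d' d ∧ IsOpen V' ∧ V'.Nonempty ∧ V' ⊆ {y | r y d'} ∪ {d'} := by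
    intro d V hVo hVne hVsub
    have hU'o : IsOpen (V ∩ {d}ᶜ) := hVo.inter isClosed_singleton.isOpen_compl
    have hU'ne : (V ∩ {d}ᶜ).Nonempty := by
      obtain ⟨x, hx, y, hy, hxy⟩ := two V hVo hVne
      by_cases hxd : x = d
      · subst hxd
        exact ⟨y, hy, by simp [Ne.symm hxy]⟩
      · exact ⟨x, hx, by simp [hxd]⟩
    have hU'sub : V ∩ {d}ᶜ ⊆ {y | r y d} := by
      intro z hz
      rcases hVsub hz.1 with h | h
      · exact h
      · exact absurd h hz.2
    obtain ⟨d', hd', V', hV'⟩ := loc (V ∩ {d}ᶜ) hU'o hU'ne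
    exact ⟨d', V', hU'sub hd'.2, hV'⟩
  obtain ⟨d0, hd0, V0, hV0o, hV0ne, hV0sub⟩ :=
    loc Set.univ isOpen_univ Set.univ_nonempty
  set T := {p : X × Set X // IsOpen p.2 ∧ p.2.Nonempty ∧ p.2 ⊆ {y | r y p.1} ∪ {p.1}} with hT
  have hstep : ∀ t : T, ∃ t' : T, r t'.val.1 t.val.1 := by
    rintro ⟨⟨d, V⟩, hVo, hVne, hVsub⟩
    obtain ⟨d', V', hr, h1, h2, h3⟩ := step d V hVo hVne hVsub
    exact ⟨⟨⟨d', V'⟩, h1, h2, h3⟩, hr⟩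
  have t0 : T := ⟨⟨d0, V0⟩, hV0o, hV0ne, hV0sub⟩
  set stepT : T → T := fun t => (hstep t).choose with hstepT
  have hstepT' : ∀ t : T, r (stepT t).val.1 t.val.1 := fun t => (hstep t).choose_spec
  set g : ℕ → T := fun n => stepT^[n] t0 with hg
  have hdesc : ∀ n, r ((g (n + 1)).val.1) ((g n).val.1) := by
    intro n
    have : g (n + 1) = stepT (g n) := by
      simp only [hg, Function.iterate_succ_apply']
    rw [this]
    exact hstepT' (g n)
  obtain ⟨a, ⟨n, rfl⟩, hmin⟩ :=
    hwo.wf.has_min (Set.range fun n => (g n).val.1) ⟨(g 0).val.1, 0, rfl⟩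
  exact hmin ((g (n+1)).val.1) ⟨n+1, rfl⟩ (hdesc n)


variable {ι : Type*}

lemma cyl_isOpen (F : Finset ι) (g : ι → Bool) :
    IsOpen {x : ι → Bool | ∀ i ∈ F, x i = g i} := by
  have : {x : ι → Bool | ∀ i ∈ F, x i = g i} = ⋂ i ∈ F, (fun x : ι → Bool => x i) ⁻¹' {g i} := by
    ext x; simp [Set.mem_iInter]
  rw [this]
  exact isOpen_biInter_finset fun i _ =>
    (continuous_apply i).isOpen_preimage _ (isOpen_discrete _)

lemma exists_cyl_subset {W : Set (ι → Bool)} (hW : IsOpen W) {x : ι → Bool} (hx : x ∈ W) :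
    ∃ F : Finset ι, {z : ι → Bool | ∀ i ∈ F, z i = x i} ⊆ W := by
  have hbasis := isTopologicalBasis_pi (fun _ : ι => isTopologicalBasis_opens (α := Bool))
  obtain ⟨S, hS, hxS, hSW⟩ := hbasis.exists_subset_of_mem_open hx hW
  obtain ⟨U, F, hUo, rfl⟩ := hS
  refine ⟨F, fun z hz => hSW ?_⟩
  intro i hi
  have : z i = x i := hz i hi
  rw [this]
  exact hxS i hi

/-- If a subset `Y` of a Cantor cube realizes every countable pattern,
then `Y` (and any superset of it) is a Baire space. -/
theorem baireSpace_of_pattern (Y : Set (ι → Bool))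
    (hP : ∀ s : Set ι, s.Countable → ∀ g : ι → Bool, ∃ y ∈ Y, ∀ i ∈ s, y i = g i) :
    BaireSpace ↥Y := by
  classical
  constructor
  intro f hfo hfd
  rw [dense_iff_inter_open]
  rintro U hU ⟨y0, hy0⟩
  obtain ⟨W, hWo, hWU⟩ := isOpen_induced_iff.1 hU
  have hy0W : (y0 : ι → Bool) ∈ W := by rw [← hWU] at hy0; exact hy0
  obtain ⟨F0, hF0⟩ := exists_cyl_subset hWo hy0W
  -- the step
  have key : ∀ (F : Finset ι) (y : ↥Y) (n : ℕ), ∃ p : Finset ι × ↥Y,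
      F ⊆ p.1 ∧ (∀ i ∈ F, (p.2 : ι → Bool) i = (y : ι → Bool) i) ∧
      {z : ↥Y | ∀ i ∈ p.1, (z : ι → Bool) i = (p.2 : ι → Bool) i} ⊆ f n := by
    intro F y n
    have hopen : IsOpen {z : ↥Y | ∀ i ∈ F, (z : ι → Bool) i = (y : ι → Bool) i} := by
      have : {z : ↥Y | ∀ i ∈ F, (z : ι → Bool) i = (y : ι → Bool) i}
          = Subtype.val ⁻¹' {x : ι → Bool | ∀ i ∈ F, x i = (y : ι → Bool) i} := rfl
      rw [this]
      exact (cyl_isOpen F _).preimage continuous_subtype_val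
    obtain ⟨z, hz⟩ := (hfd n).inter_open_nonempty _ hopen ⟨y, fun i _ => rfl⟩
    obtain ⟨Wn, hWno, hWnf⟩ := isOpen_induced_iff.1 (hfo n)
    have hzW : (z : ι → Bool) ∈ Wn := by
      have := hz.2; rw [← hWnf] at this; exact this
    obtain ⟨G, hG⟩ := exists_cyl_subset hWno hzW
    refine ⟨⟨F ∪ G, z⟩, Finset.subset_union_left, fun i hi => hz.1 i hi, ?_⟩
    intro w hw
    have : (w : ι → Bool) ∈ Wn := by
      apply hG
      intro i hi
      exact hw i (Finset.mem_union_right _ hi)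
    rw [← hWnf]; exact this
  -- the recursion
  set seq : ℕ → Finset ι × ↥Y :=
    fun n => Nat.rec (⟨F0, y0⟩ : Finset ι × ↥Y) (fun n p => (key p.1 p.2 n).choose) n with hseq
  have seq_succ : ∀ n, seq (n + 1) = (key (seq n).1 (seq n).2 n).choose := fun n => rfl
  have hspec : ∀ n, (seq n).1 ⊆ (seq (n+1)).1 ∧
      (∀ i ∈ (seq n).1, ((seq (n+1)).2 : ι → Bool) i = ((seq n).2 : ι → Bool) i) ∧
      {z : ↥Y | ∀ i ∈ (seq (n+1)).1, (z : ι → Bool) i = ((seq (n+1)).2 : ι → Bool) i} ⊆ f n := by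
    intro n
    rw [seq_succ n]
    exact (key (seq n).1 (seq n).2 n).choose_spec
  have hmono : ∀ m n, n ≤ m → (seq n).1 ⊆ (seq m).1 := by
    intro m
    induction m with
    | zero => intro n hn; rw [Nat.le_zero.1 hn]
    | succ m ih =>
      intro n hn
      rcases Nat.lt_or_ge n (m+1) with h | h
      · exact (ih n (Nat.lt_succ_iff.1 h)).trans (hspec m).1
      · have : n = m + 1 := Nat.le_antisymm hn h
        rw [this]
  have hagree : ∀ m n, n ≤ m → ∀ i ∈ (seq n).1,
      ((seq m).2 : ι → Bool) i = ((seq n).2 : ι → Bool) i := by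
    intro m
    induction m with
    | zero => intro n hn i hi; rw [Nat.le_zero.1 hn]
    | succ m ih =>
      intro n hn i hi
      rcases Nat.lt_or_ge n (m+1) with h | h
      · have h' : n ≤ m := Nat.lt_succ_iff.1 h
        have : ((seq (m+1)).2 : ι → Bool) i = ((seq m).2 : ι → Bool) i :=
          (hspec m).2.1 i (hmono m n h' hi)
        rw [this]
        exact ih n h' i hi
      · have : n = m + 1 := Nat.le_antisymm hn h
        rw [this]
  -- the limit pattern
  set s : Set ι := ⋃ n, ((seq n).1 : Set ι) with hs
  have hsc : s.Countable := countable_iUnion fun n => (seq n).1.countable_toSet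
  set gfun : ι → Bool := fun i =>
    if h : ∃ n, i ∈ (seq n).1 then ((seq (Nat.find h)).2 : ι → Bool) i else false with hgfun
  obtain ⟨b, hbY, hbs⟩ := hP s hsc gfun
  have hbn : ∀ n, ∀ i ∈ (seq n).1, b i = ((seq n).2 : ι → Bool) i := by
    intro n i hi
    have his : i ∈ s := Set.mem_iUnion.2 ⟨n, hi⟩
    have hex : ∃ m, i ∈ (seq m).1 := ⟨n, hi⟩
    have hfind : Nat.find hex ≤ n := Nat.find_min' hex hi
    have h1 : b i = ((seq (Nat.find hex)).2 : ι → Bool) i := by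
      rw [hbs i his, hgfun]
      simp only [dif_pos hex]
    rw [h1]
    exact (hagree n (Nat.find hex) hfind i (Nat.find_spec hex)).symm
  refine ⟨⟨b, hbY⟩, ?_, ?_⟩
  · rw [← hWU]
    apply hF0
    intro i hi
    exact hbn 0 i hi
  · rw [Set.mem_iInter]
    intro n
    apply (hspec n).2.2
    intro i hi
    exact hbn (n+1) i hi


lemma dense_of_finite_pattern {ι : Type u} (Y : Set (ι → Bool))
    (h : ∀ F : Finset ι, ∀ g : ι → Bool, ∃ y ∈ Y, ∀ i ∈ F, y i = g i) :
    Dense Y := by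
  have hbasis := isTopologicalBasis_pi (fun _ : ι => isTopologicalBasis_opens (α := Bool))
  rw [hbasis.dense_iff]
  rintro o ⟨U, F, hUo, rfl⟩ ⟨x0, hx0⟩
  obtain ⟨y, hy, hagree⟩ := h F x0
  refine ⟨y, ?_, hy⟩
  intro i hi
  rw [hagree i hi]
  exact hx0 i hi

lemma exists_A {ι : Type u} (em : ι → ℕ → Bool) (hem : Function.Injective em) :
    ∃ A : Set (ι → Bool), A.Countable ∧ A.Nonempty ∧
      ∀ F : Finset ι, ∀ g : ι → Bool, ∃ y ∈ A, ∀ i ∈ F, y i = g i := by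
  classical
  set dd : (Σ N : ℕ, ((Fin N → Bool) → Bool)) → (ι → Bool) :=
    fun q => fun i => q.2 (fun k => em i k.val) with hdd
  refine ⟨Set.range dd, Set.countable_range dd, ⟨dd ⟨0, fun _ => false⟩, ⟨_, rfl⟩⟩, ?_⟩
  intro F g
  -- find a separating length N
  set N : ℕ := (F ×ˢ F).sup
    (fun q => if h : ∃ n, em q.1 n ≠ em q.2 n then Nat.find h + 1 else 0) with hN
  have hsep : ∀ i ∈ F, ∀ j ∈ F, i ≠ j →
      (fun k : Fin N => em i k.val) ≠ (fun k : Fin N => em j k.val) := by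
    intro i hi j hj hij
    have hij' : em i ≠ em j := fun hc => hij (hem hc)
    have hex : ∃ n, em i n ≠ em j n := by
      by_contra hcon
      push_neg at hcon
      exact hij' (funext hcon)
    have hlt : Nat.find hex < N := by
      have hle : Nat.find hex + 1 ≤ N := by
        have hmem : (i, j) ∈ F ×ˢ F := Finset.mem_product.2 ⟨hi, hj⟩
        have := Finset.le_sup (f := fun q : ι × ι =>
          if h : ∃ n, em q.1 n ≠ em q.2 n then Nat.find h + 1 else 0) hmem
        simp only [] at this
        rw [dif_pos hex] at this
        exact this
      omega
    intro hc
    have := congrFun hc ⟨Nat.find hex, hlt⟩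
    exact Nat.find_spec hex this
  set gg : (Fin N → Bool) → Bool := fun v =>
    if h : ∃ i, i ∈ F ∧ (fun k : Fin N => em i k.val) = v then g h.choose else false with hgg
  refine ⟨dd ⟨N, gg⟩, ⟨_, rfl⟩, ?_⟩
  intro i hi
  have hx : ∃ j, j ∈ F ∧ (fun k : Fin N => em j k.val) = (fun k : Fin N => em i k.val) :=
    ⟨i, hi, rfl⟩
  have : dd ⟨N, gg⟩ i = g hx.choose := by
    simp only [hdd, hgg]
    rw [dif_pos hx]
  rw [this]
  obtain ⟨hjF, hjeq⟩ := hx.choose_spec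
  by_cases hji : hx.choose = i
  · rw [hji]
  · exact absurd hjeq (hsep _ hjF i hi hji)


lemma exists_B {ι : Type u} (hℵ : (ℵ₀ : Cardinal.{u}) < #ι)
    (hQ : #(ℕ → ι × Bool) ≤ #ι) :
    ∃ B : Set (ι → Bool),
      (∀ s : Set ι, s.Countable → ∀ g : ι → Bool, ∃ y ∈ B, ∀ i ∈ s, y i = g i) ∧
      IsLeftSeparated ↥B := by
  classical
  set Q := (ℕ → ι × Bool) with hQdef
  obtain ⟨r, wo, hord⟩ := Cardinal.ord_eq Q
  haveI := wo
  set V := {x : (ι → Bool) × ι // {i | x.1 i = true}.Countable} with hV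
  -- the choice at each stage
  have exists_point : ∀ (p : Q) (prior : ∀ q, r q p → V), ∃ v : V,
      (∀ n, ∃ m, (p m).1 = (p n).1 ∧ v.val.1 ((p n).1) = (p m).2) ∧
      v.val.1 v.val.2 = true ∧
      (∀ q (h : r q p), (prior q h).val.1 v.val.2 = false) := by
    intro p prior
    set S : Set ι := (Set.range fun n => (p n).1) ∪
      (⋃ q : {q // r q p}, {i | (prior q.1 q.2).val.1 i = true}) with hSdef
    have hScard : #S < #ι := by
      have h1 : #(Set.range fun n => (p n).1) ≤ ℵ₀ := by
        haveI := (Set.countable_range fun n => (p n).1).to_subtype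
        exact mk_le_aleph0
      have h2 : #(⋃ q : {q // r q p}, {i | (prior q.1 q.2).val.1 i = true})
          ≤ #{q // r q p} * ℵ₀ := by
        refine (mk_iUnion_le_sum_mk).trans ?_
        refine le_trans (Cardinal.sum_le_sum _ (fun _ => ℵ₀) ?_) ?_
        · intro q
          haveI := ((prior q.1 q.2).2).to_subtype
          exact mk_le_aleph0
        · rw [Cardinal.sum_const']
      have h3 : #{q // r q p} < #ι := by
        have := Cardinal.card_typein_lt p hord
        calc #{q // r q p} = (Ordinal.typein r p).card := Ordinal.card_typein p
          _ < #Q := this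
          _ ≤ #ι := hQ
      have h4 : #{q // r q p} * ℵ₀ < #ι :=
        Cardinal.mul_lt_of_lt hℵ.le h3 hℵ
      calc #S ≤ _ + _ := mk_union_le _ _
        _ < #ι := Cardinal.add_lt_of_lt hℵ.le (lt_of_le_of_lt h1 hℵ)
            (lt_of_le_of_lt h2 h4)
    have hSne : ∃ ν : ι, ν ∉ S := by
      by_contra hcon
      push_neg at hcon
      have : S = Set.univ := Set.eq_univ_iff_forall.2 hcon
      rw [this, mk_univ] at hScard
      exact lt_irrefl _ hScard
    obtain ⟨ν, hν⟩ := hSne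
    have hνr : ∀ n, (p n).1 ≠ ν := by
      intro n hn
      exact hν (Or.inl ⟨n, hn⟩)
    set b : ι → Bool := fun i =>
      if i = ν then true
      else if h : ∃ n, (p n).1 = i then (p (Nat.find h)).2 else false with hb
    have hbsupp : {i | b i = true}.Countable := by
      have : {i | b i = true} ⊆ insert ν (Set.range fun n => (p n).1) := by
        intro i hi
        simp only [hb, Set.mem_setOf_eq] at hi
        by_cases h1 : i = ν
        · exact Or.inl h1
        · rw [if_neg h1] at hi
          by_cases h2 : ∃ n, (p n).1 = i
          · exact Or.inr h2
          · rw [dif_neg h2] at hi; exact absurd hi (by simp)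
      exact Set.Countable.mono this ((Set.countable_range _).insert ν)
    refine ⟨⟨(b, ν), hbsupp⟩, ?_, ?_, ?_⟩
    · intro n
      have hne : (p n).1 ≠ ν := hνr n
      have hex : ∃ m, (p m).1 = (p n).1 := ⟨n, rfl⟩
      refine ⟨Nat.find hex, Nat.find_spec hex, ?_⟩
      simp only [hb]
      rw [if_neg hne, dif_pos hex]
    · simp [hb]
    · intro q h
      have : ν ∉ {i | (prior q h).val.1 i = true} := by
        intro hmem
        exact hν (Or.inr (Set.mem_iUnion.2 ⟨⟨q, h⟩, hmem⟩))
      simpa using this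
  -- the recursion
  set step : ∀ p : Q, (∀ q, r q p → V) → V :=
    fun p prior => (exists_point p prior).choose with hstep
  set F : Q → V := wo.wf.fix step with hFdef
  have hFeq : ∀ p, F p = step p (fun q _ => F q) := fun p => wo.wf.fix_eq step p
  have hFs : ∀ p, (∀ n, ∃ m, (p m).1 = (p n).1 ∧ (F p).val.1 ((p n).1) = (p m).2) ∧
      (F p).val.1 (F p).val.2 = true ∧
      (∀ q (h : r q p), (F q).val.1 (F p).val.2 = false) := by
    intro p
    rw [hFeq p]
    exact (exists_point p (fun q _ => F q)).choose_spec
  set bOf : Q → (ι → Bool) := fun p => (F p).val.1 with hbOf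
  set vOf : Q → ι := fun p => (F p).val.2 with hvOf
  have hν1 : ∀ p, bOf p (vOf p) = true := fun p => (hFs p).2.1
  have hν0 : ∀ p q, r q p → bOf q (vOf p) = false := fun p q h => (hFs p).2.2 q h
  have hsat : ∀ p n, ∃ m, (p m).1 = (p n).1 ∧ bOf p ((p n).1) = (p m).2 :=
    fun p => (hFs p).1
  have hne_of_r : ∀ p q, r q p → bOf p ≠ bOf q := by
    intro p q h heq
    have h1 := hν1 p
    have h2 := hν0 p q h
    rw [← heq] at h2
    rw [h1] at h2
    simp at h2
  have binj : Function.Injective bOf := by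
    intro p q heq
    by_contra hpq
    rcases trichotomous_of r p q with h | h | h
    · exact hne_of_r q p h heq.symm
    · exact hpq h
    · exact hne_of_r p q h heq
  haveI hι : Nonempty ι := by
    rcases isEmpty_or_nonempty ι with h | h
    · exfalso
      rw [Cardinal.mk_eq_zero ι] at hℵ
      exact (Cardinal.aleph0_pos.trans hℵ).ne' rfl
    · exact h
  refine ⟨Set.range bOf, ?_, ?_⟩
  · intro s hs g
    rcases s.eq_empty_or_nonempty with rfl | hsne
    · exact ⟨bOf (fun _ => (Classical.arbitrary ι, false)), ⟨_, rfl⟩, by simp⟩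
    · obtain ⟨f, hf⟩ := hs.exists_eq_range hsne
      set p : Q := fun n => (f n, g (f n)) with hp
      refine ⟨bOf p, ⟨p, rfl⟩, ?_⟩
      intro i hi
      rw [hf] at hi
      obtain ⟨n, rfl⟩ := hi
      obtain ⟨m, hm1, hm2⟩ := hsat p n
      have hm1' : f m = f n := hm1
      have hm2' : bOf p (f n) = g (f m) := hm2
      rw [hm2', hm1']
  · have hmem : ∀ x : ↥(Set.range bOf), ∃ p, bOf p = x.val := fun x => x.2
    set idx : ↥(Set.range bOf) → Q := fun x => (hmem x).choose with hidxdef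
    have hidx : ∀ x, bOf (idx x) = x.val := fun x => (hmem x).choose_spec
    set rel : ↥(Set.range bOf) → ↥(Set.range bOf) → Prop :=
      fun x y => r (idx x) (idx y) with hreldef
    have hrelwf : WellFounded rel := InvImage.wf idx wo.wf
    haveI htri : IsTrichotomous ↥(Set.range bOf) rel := trichotomous_def.2 fun a b hab hba => (show rel a b ∨ a = b ∨ rel b a by
      rcases trichotomous_of r (idx a) (idx b) with h | h | h
      · exact Or.inl h
      · refine Or.inr (Or.inl ?_)
        apply Subtype.ext
        rw [← hidx a, ← hidx b, h]
      · exact Or.inr (Or.inr h)).elim (absurd · hab) (·.elim id (absurd · hba))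
    haveI htrans : IsTrans ↥(Set.range bOf) rel :=
      ⟨fun a b c hab hbc => IsTrans.trans (α := Q) (r := r) _ _ _ hab hbc⟩
    haveI hwf : IsWellFounded ↥(Set.range bOf) rel := ⟨hrelwf⟩
    have hwo2 : IsWellOrder ↥(Set.range bOf) rel := ⟨⟩
    refine ⟨@Ordinal.type _ rel hwo2, rel, hwo2, ?_, rfl⟩
    intro x
    rw [← isOpen_compl_iff, isOpen_iff_forall_mem_open]
    intro z hz
    have hz' : ¬ r (idx z) (idx x) := hz
    refine ⟨{w : ↥(Set.range bOf) | w.val (vOf (idx z)) = true}, ?_, ?_, ?_⟩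
    · intro w hw
      have hw' : w.val (vOf (idx z)) = true := hw
      have hwz : ¬ r (idx w) (idx z) := by
        intro hc
        have h0 := hν0 (idx z) (idx w) hc
        rw [hidx w] at h0
        rw [hw'] at h0
        simp at h0
      intro hc
      have hc' : r (idx w) (idx x) := hc
      rcases trichotomous_of r (idx z) (idx w) with h | h | h
      · exact hz' (IsTrans.trans (α := Q) (r := r) _ _ _ h hc')
      · exact hz' (h ▸ hc')
      · exact hwz h
    · have : {w : ↥(Set.range bOf) | w.val (vOf (idx z)) = true} =
          Subtype.val ⁻¹' ((fun v : ι → Bool => v (vOf (idx z))) ⁻¹' {true}) := rfl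
      rw [this]
      exact (((continuous_apply _).isOpen_preimage _ (isOpen_discrete _))).preimage
        continuous_subtype_val
    · show z.val (vOf (idx z)) = true
      rw [← hidx z]
      exact hν1 (idx z)


abbrev iot : Type 1 := ↥(Set.Iio ((2 ^ Cardinal.aleph0 : Cardinal.{0}).ord))

lemma hmk : #iot = Cardinal.lift.{1} (2 ^ aleph0 : Cardinal.{0}) := by
  rw [Ordinal.mk_Iio_ordinal, Cardinal.card_ord]

lemma hc2 : ((2 ^ aleph0 : Cardinal.{0}) * 2) = (2 ^ aleph0 : Cardinal.{0}) := by
  refine Cardinal.mul_eq_left (Cardinal.cantor ℵ₀).le ?_ two_ne_zero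
  have h1 : (2 : Cardinal.{0}) ≤ ℵ₀ := by
    exact_mod_cast (Cardinal.nat_lt_aleph0 2).le
  exact h1.trans (Cardinal.cantor ℵ₀).le

lemma hcpow : ((2 ^ aleph0 : Cardinal.{0}) ^ aleph0) = (2 ^ aleph0 : Cardinal.{0}) := by
  rw [← Cardinal.power_mul, Cardinal.aleph0_mul_aleph0]

lemma haleph : (ℵ₀ : Cardinal.{1}) < #iot := by
  rw [hmk, ← Cardinal.lift_aleph0.{1,0}]
  rw [Cardinal.lift_lt]
  exact Cardinal.cantor ℵ₀

lemma hQcard : #(ℕ → iot × Bool) ≤ #iot := by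
  apply le_of_eq
  rw [Cardinal.mk_arrow]
  rw [Cardinal.mk_prod]
  rw [Cardinal.mk_bool, Cardinal.mk_nat]
  rw [hmk]
  simp only [Cardinal.lift_id'.{0,1}]
  rw [Cardinal.lift_aleph0.{1,0}]
  rw [← Cardinal.lift_mul, hc2]
  rw [← Cardinal.lift_aleph0.{1,0}, ← Cardinal.lift_power, hcpow]

lemma hembed : ∃ em : iot → (ℕ → Bool), Function.Injective em := by
  have h : Cardinal.lift.{0} #iot ≤ Cardinal.lift.{1} #(ℕ → Bool) := by
    rw [Cardinal.mk_arrow, Cardinal.mk_bool, Cardinal.mk_nat,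
      Cardinal.lift_id, Cardinal.lift_id, Cardinal.lift_id'.{0,1}, hmk]
  obtain ⟨f⟩ := Cardinal.lift_mk_le'.mp h
  exact ⟨f, f.injective⟩


theorem stmt_12 :
    ∃ A B : Set CantorCubeContinuum,
      Dense A ∧ Dense B ∧ IsLeftSeparated ↥A ∧ IsLeftSeparated ↥B ∧
      ¬ IsLeftSeparated ↥(A ∪ B) := by
  classical
  obtain ⟨em, hem⟩ := hembed
  obtain ⟨A, hAc, hAne, hApat⟩ := exists_A em hem
  obtain ⟨B, hBpat, hBls⟩ := exists_B haleph hQcard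
  have hADense : Dense A := dense_of_finite_pattern A hApat
  have hBDense : Dense B :=
    dense_of_finite_pattern B (fun F g => hBpat (↑F) F.countable_toSet g)
  refine ⟨A, B, hADense, hBDense, ?_, hBls, ?_⟩
  · haveI : Countable ↥A := hAc.to_subtype
    exact isLeftSeparated_of_countable inferInstance
  · haveI hne : Nonempty ↥(A ∪ B) := ⟨⟨hAne.choose, Or.inl hAne.choose_spec⟩⟩
    haveI hBaire : BaireSpace ↥(A ∪ B) := baireSpace_of_pattern (A ∪ B)
      (fun s hs g => by
        obtain ⟨y, hy, h⟩ := hBpat s hs g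
        exact ⟨y, Or.inr hy, h⟩)
    apply not_isLeftSeparated ({x : ↥(A ∪ B) | x.val ∈ A})
    · exact hAc.preimage Subtype.val_injective
    · rw [dense_iff_inter_open]
      rintro U hU ⟨x, hx⟩
      obtain ⟨W, hWo, hWU⟩ := isOpen_induced_iff.1 hU
      have hxW : x.val ∈ W := by rw [← hWU] at hx; exact hx
      obtain ⟨a, ha⟩ := hADense.inter_open_nonempty W hWo ⟨x.val, hxW⟩
      refine ⟨⟨a, Or.inl ha.2⟩, ?_, ha.2⟩
      rw [← hWU]
      exact ha.1
    · rintro V hV ⟨x, hx⟩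
      obtain ⟨W, hWo, hWV⟩ := isOpen_induced_iff.1 hV
      have hxW : x.val ∈ W := by rw [← hWV] at hx; exact hx
      obtain ⟨F, hF⟩ := exists_cyl_subset hWo hxW
      haveI : Infinite iot := Cardinal.infinite_iff.2 haleph.le
      obtain ⟨i, hi⟩ := Infinite.exists_notMem_finset F
      set y : CantorCubeContinuum := Function.update x.val i (!(x.val i)) with hy
      have hyW : y ∈ W := by
        apply hF
        intro j hj
        have hji : j ≠ i := fun hc => hi (hc ▸ hj)
        simp only [hy]
        rw [Function.update_of_ne hji]
      have hyx : y ≠ x.val := by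
        intro hc
        have := congrFun hc i
        simp only [hy] at this
        rw [Function.update_self] at this
        exact Bool.not_ne_self _ this
      have hW' : IsOpen (W ∩ {x.val}ᶜ) := hWo.inter isClosed_singleton.isOpen_compl
      obtain ⟨a, ha⟩ := hADense.inter_open_nonempty _ hW' ⟨y, hyW, hyx⟩
      refine ⟨x, hx, ⟨a, Or.inl ha.2⟩, ?_, ?_⟩
      · rw [← hWV]
        exact ha.1.1
      · intro hc
        apply ha.1.2
        have : x.val = a := congrArg Subtype.val hc
        rw [← this]
        rfl
    · exact fun U hU hUne F hF hcov => baire_cover U hU hUne F hF hcov
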